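/- Fix β ∈ ℝ, γ ∈ ℂ and C₀ > 0. Suppose that for each real μ ≥ 1 the pair Z_μ = (Z¹_μ, Z²_μ) : ℝ → ℂ × ℂ is a differentiable solution of the system dZ¹/dτ = i(Z¹ + β Z²), dZ²/dτ = i(β Z¹ + μ Z²), whose initial data satisfy |Z¹_μ(0) − γ| + |Z²_μ(0)| ≤ C₀/μ. Then for every bounded interval [a,b] ⊂ ℝ, the quantity sup_{a ≤ τ ≤ b} (|Z¹_μ(τ) − γ e^{iτ}| + |Z²_μ(τ)|) tends to 0 as μ → +∞. -/

import Mathlib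

open Complex intervalIntegral

lemma cexp_lin_deriv (c : ℂ) (t : ℝ) :
    HasDerivAt (fun s : ℝ => Complex.exp (c * s)) (c * Complex.exp (c * t)) t := by
  have h0 : HasDerivAt (fun s : ℝ => (s : ℂ)) 1 t := by
    simpa using (hasDerivAt_id t).ofReal_comp
  have h1 := (h0.const_mul c).cexp
  simpa [mul_comm] using h1

lemma normSq_conserved (β μ : ℝ) (Z1 Z2 : ℝ → ℂ)
    (h1 : ∀ τ, HasDerivAt Z1 (Complex.I * (Z1 τ + (β:ℂ) * Z2 τ)) τ)
    (h2 : ∀ τ, HasDerivAt Z2 (Complex.I * ((β:ℂ) * Z1 τ + (μ:ℂ) * Z2 τ)) τ) (τ : ℝ) :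
    Complex.normSq (Z1 τ) + Complex.normSq (Z2 τ)
      = Complex.normSq (Z1 0) + Complex.normSq (Z2 0) := by
  have key : ∀ t : ℝ, HasDerivAt
      (fun s => Complex.normSq (Z1 s) + Complex.normSq (Z2 s)) 0 t := by
    intro t
    have r1 : HasDerivAt (fun s => (Z1 s).re) (Complex.I * (Z1 t + (β:ℂ) * Z2 t)).re t :=
      Complex.reCLM.hasFDerivAt.comp_hasDerivAt t (h1 t)
    have i1 : HasDerivAt (fun s => (Z1 s).im) (Complex.I * (Z1 t + (β:ℂ) * Z2 t)).im t :=
      Complex.imCLM.hasFDerivAt.comp_hasDerivAt t (h1 t)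
    have r2 : HasDerivAt (fun s => (Z2 s).re) (Complex.I * ((β:ℂ) * Z1 t + (μ:ℂ) * Z2 t)).re t :=
      Complex.reCLM.hasFDerivAt.comp_hasDerivAt t (h2 t)
    have i2 : HasDerivAt (fun s => (Z2 s).im) (Complex.I * ((β:ℂ) * Z1 t + (μ:ℂ) * Z2 t)).im t :=
      Complex.imCLM.hasFDerivAt.comp_hasDerivAt t (h2 t)
    have H := ((r1.mul r1).add (i1.mul i1)).add ((r2.mul r2).add (i2.mul i2))
    simp only [Complex.normSq_apply]
    refine H.congr_deriv ?_
    simp [Complex.mul_re, Complex.mul_im, Complex.add_re, Complex.add_im,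
      Complex.ofReal_re, Complex.ofReal_im, Complex.I_re, Complex.I_im]
    ring
  exact is_const_of_deriv_eq_zero
    (f := fun s => Complex.normSq (Z1 s) + Complex.normSq (Z2 s))
    (fun t => (key t).differentiableAt) (fun t => (key t).deriv) τ 0

lemma key_bound (β μ : ℝ) (hμ : 1 ≤ μ) (γ : ℂ) (C₀ T : ℝ) (hC₀ : 0 ≤ C₀) (hT : 0 ≤ T)
    (Z1 Z2 : ℝ → ℂ)
    (h1 : ∀ τ, HasDerivAt Z1 (Complex.I * (Z1 τ + (β:ℂ) * Z2 τ)) τ)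
    (h2 : ∀ τ, HasDerivAt Z2 (Complex.I * ((β:ℂ) * Z1 τ + (μ:ℂ) * Z2 τ)) τ)
    (hinit : ‖Z1 0 - γ‖ + ‖Z2 0‖ ≤ C₀ / μ)
    (τ : ℝ) (hτ : |τ| ≤ T) :
    ‖Z1 τ - γ * Complex.exp (Complex.I * (τ:ℂ))‖ + ‖Z2 τ‖
      ≤ (C₀ + (|β| * T + 1) *
          (C₀ + |β| * (2 * (‖γ‖ + C₀) + (1 + |β|) * (‖γ‖ + C₀) * T))) / μ := by
  have hμ0 : (0:ℝ) < μ := lt_of_lt_of_le one_pos hμ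
  set M : ℝ := ‖γ‖ + C₀ with hM
  have hinit' : ‖Z1 0‖ + ‖Z2 0‖ ≤ M := by
    have h01 : ‖Z1 0‖ ≤ ‖γ‖ + ‖Z1 0 - γ‖ := by
      calc ‖Z1 0‖ = ‖γ + (Z1 0 - γ)‖ := by ring_nf
        _ ≤ _ := norm_add_le _ _
    have hCμ : C₀ / μ ≤ C₀ := by
      rw [div_le_iff₀ hμ0]; nlinarith
    linarith
  have hM0 : 0 ≤ M := le_trans (by positivity) hinit'
  have hbd : ∀ s, ‖Z1 s‖ ≤ M ∧ ‖Z2 s‖ ≤ M := by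
    intro s
    have h := normSq_conserved β μ Z1 Z2 h1 h2 s
    rw [← Complex.sq_norm (Z1 s), ← Complex.sq_norm (Z2 s), ← Complex.sq_norm (Z1 0),
      ← Complex.sq_norm (Z2 0)] at h
    constructor <;>
      nlinarith [norm_nonneg (Z1 s), norm_nonneg (Z2 s),
        norm_nonneg (Z1 0), norm_nonneg (Z2 0)]
  have hcont1 : Continuous Z1 := by
    rw [continuous_iff_continuousAt]; exact fun t => (h1 t).continuousAt
  have hcont2 : Continuous Z2 := by
    rw [continuous_iff_continuousAt]; exact fun t => (h2 t).continuousAt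
  set D : ℝ := C₀ + |β| * (2 * M + (1 + |β|) * M * T) with hDdef
  have hD0 : 0 ≤ D := by positivity
  -- Step 1: bound on Z2 for all |s| ≤ T
  have hZ2b : ∀ s : ℝ, |s| ≤ T → ‖Z2 s‖ ≤ D / μ := by
    intro s hs
    set c : ℂ := -(Complex.I * (μ:ℝ)) with hc
    have habs_e : ∀ t : ℝ, ‖Complex.exp (c * t)‖ = 1 := by
      intro t; simp [hc, Complex.norm_exp]
    set J : ℂ := ∫ t in (0:ℝ)..s, Complex.exp (c * t) * Z1 t with hJ
    have hg : ∀ t : ℝ, HasDerivAt (fun u : ℝ => Complex.exp (c * u) * Z1 u)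
        (c * Complex.exp (c * t) * Z1 t
          + Complex.exp (c * t) * (Complex.I * (Z1 t + (β:ℂ) * Z2 t))) t :=
      fun t => (cexp_lin_deriv c t).mul (h1 t)
    have hftc_g := intervalIntegral.integral_eq_sub_of_hasDerivAt (a := 0) (b := s)
        (f := fun u : ℝ => Complex.exp (c * u) * Z1 u)
        (fun t _ => hg t)
        (Continuous.intervalIntegrable (by fun_prop) 0 s)
    have hsplit : (∫ t in (0:ℝ)..s, (c * Complex.exp (c * t) * Z1 t
          + Complex.exp (c * t) * (Complex.I * (Z1 t + (β:ℂ) * Z2 t))))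
        = c * J + ∫ t in (0:ℝ)..s, Complex.exp (c * t) * (Complex.I * (Z1 t + (β:ℂ) * Z2 t)) := by
      rw [intervalIntegral.integral_add (Continuous.intervalIntegrable (by fun_prop) 0 s)
        (Continuous.intervalIntegrable (by fun_prop) 0 s)]
      congr 1
      simp only [mul_assoc]
      rw [intervalIntegral.integral_const_mul]
    set K : ℂ := ∫ t in (0:ℝ)..s, Complex.exp (c * t) * (Complex.I * (Z1 t + (β:ℂ) * Z2 t))
      with hK
    have hKbd : ‖K‖ ≤ (1 + |β|) * M * T := by
      have hK1 : ‖K‖ ≤ ((1 + |β|) * M) * |s - 0| := by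
        rw [hK]
        apply intervalIntegral.norm_integral_le_of_norm_le_const
        intro t ht
        have he := habs_e t
        calc ‖Complex.exp (c * t) * (Complex.I * (Z1 t + (β:ℂ) * Z2 t))‖
            = ‖Z1 t + (β:ℂ) * Z2 t‖ := by
              simp only [norm_mul, he, Complex.norm_I, one_mul]
          _ ≤ ‖Z1 t‖ + |β| * ‖Z2 t‖ := by
              refine le_trans (norm_add_le _ _) ?_
              simp [Complex.norm_real]
          _ ≤ (1 + |β|) * M := by
              have := hbd t
              nlinarith [abs_nonneg β]
      calc ‖K‖ ≤ ((1 + |β|) * M) * |s - 0| := hK1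
        _ ≤ (1 + |β|) * M * T := by
            rw [sub_zero]
            have h3 : 0 ≤ (1 + |β|) * M := by positivity
            nlinarith
    have hgsbd : ∀ t : ℝ, ‖Complex.exp (c * t) * Z1 t‖ ≤ M := by
      intro t
      rw [norm_mul, habs_e t, one_mul]; exact (hbd t).1
    have hJbd : ‖J‖ ≤ (2 * M + (1 + |β|) * M * T) / μ := by
      have hid : c * J = (Complex.exp (c * s) * Z1 s - Complex.exp (c * (0:ℝ)) * Z1 0) - K := by
        rw [← hftc_g, hsplit]; ring
      have habs : μ * ‖J‖ = ‖c * J‖ := by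
        rw [norm_mul]
        simp [hc, abs_of_pos hμ0]
      have hcJ : ‖c * J‖ ≤ 2 * M + (1 + |β|) * M * T := by
        rw [hid]
        calc ‖Complex.exp (c * s) * Z1 s - Complex.exp (c * (0:ℝ)) * Z1 0 - K‖
            ≤ ‖Complex.exp (c * s) * Z1 s - Complex.exp (c * (0:ℝ)) * Z1 0‖
              + ‖K‖ := norm_sub_le _ _
          _ ≤ (‖Complex.exp (c * s) * Z1 s‖
              + ‖Complex.exp (c * (0:ℝ)) * Z1 0‖) + ‖K‖ := by
              have := norm_sub_le (Complex.exp (c * s) * Z1 s)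
                (Complex.exp (c * (0:ℝ)) * Z1 0)
              linarith
          _ ≤ (M + M) + (1 + |β|) * M * T := by
              have := hgsbd s; have := hgsbd 0; linarith
          _ = 2 * M + (1 + |β|) * M * T := by ring
      rw [le_div_iff₀ hμ0]
      nlinarith [norm_nonneg J]
    -- representation of Z2
    have hW2 : ∀ t : ℝ, HasDerivAt (fun u : ℝ => Complex.exp (c * u) * Z2 u)
        (Complex.I * (β:ℂ) * (Complex.exp (c * t) * Z1 t)) t := by
      intro t
      have h := (cexp_lin_deriv c t).mul (h2 t)
      refine h.congr_deriv ?_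
      simp only [hc]; ring
    have hftc2 := intervalIntegral.integral_eq_sub_of_hasDerivAt (a := 0) (b := s)
        (fun t _ => hW2 t) (Continuous.intervalIntegrable (by fun_prop) 0 s)
    rw [intervalIntegral.integral_const_mul] at hftc2
    have h00 : Complex.exp (c * ((0:ℝ):ℂ)) = 1 := by simp
    have hZ2eq : Complex.exp (c * s) * Z2 s = Z2 0 + Complex.I * (β:ℂ) * J := by
      simp only [h00, one_mul, Complex.ofReal_zero, mul_zero, Complex.exp_zero] at hftc2
      linear_combination -hftc2
    have hstep : ‖Z2 s‖ ≤ ‖Z2 0‖ + |β| * ‖J‖ := by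
      calc ‖Z2 s‖ = ‖Complex.exp (c * s) * Z2 s‖ := by
            rw [norm_mul, habs_e, one_mul]
        _ = ‖Z2 0 + Complex.I * (β:ℂ) * J‖ := by rw [hZ2eq]
        _ ≤ ‖Z2 0‖ + ‖Complex.I * (β:ℂ) * J‖ := norm_add_le _ _
        _ = ‖Z2 0‖ + |β| * ‖J‖ := by
            rw [norm_mul, norm_mul, Complex.norm_I, one_mul, Complex.norm_real, Real.norm_eq_abs]
    have hZ20 : ‖Z2 0‖ ≤ C₀ / μ := by
      have := norm_nonneg (Z1 0 - γ); linarith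
    have hmul : |β| * ‖J‖ ≤ |β| * ((2 * M + (1 + |β|) * M * T) / μ) :=
      mul_le_mul_of_nonneg_left hJbd (abs_nonneg β)
    have heq : C₀ / μ + |β| * ((2 * M + (1 + |β|) * M * T) / μ) = D / μ := by
      rw [hDdef]; field_simp
    linarith
  -- Step 2: bound on Z1
  set e : ℂ := -Complex.I with he
  have habs_e1 : ∀ t : ℝ, ‖Complex.exp (e * t)‖ = 1 := by
    intro t; simp [he, Complex.norm_exp]
  have hW1 : ∀ t : ℝ, HasDerivAt (fun u : ℝ => Complex.exp (e * u) * Z1 u)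
      (Complex.I * (β:ℂ) * (Complex.exp (e * t) * Z2 t)) t := by
    intro t
    have h := (cexp_lin_deriv e t).mul (h1 t)
    refine h.congr_deriv ?_
    simp only [he]; ring
  have hftc1 := intervalIntegral.integral_eq_sub_of_hasDerivAt (a := 0) (b := τ)
      (fun t _ => hW1 t) (Continuous.intervalIntegrable (by fun_prop) 0 τ)
  have hIbd : ‖∫ t in (0:ℝ)..τ, Complex.I * (β:ℂ) * (Complex.exp (e * t) * Z2 t)‖
      ≤ (|β| * (D / μ)) * T := by
    have hb : ‖∫ t in (0:ℝ)..τ, Complex.I * (β:ℂ) * (Complex.exp (e * t) * Z2 t)‖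
        ≤ (|β| * (D / μ)) * |τ - 0| := by
      apply intervalIntegral.norm_integral_le_of_norm_le_const
      intro t ht
      have htT : |t| ≤ T := by
        rcases Set.mem_uIoc.1 ht with h' | h'
        · rw [abs_of_pos h'.1]; exact le_trans (le_trans h'.2 (le_abs_self τ)) hτ
        · rw [abs_of_nonpos h'.2]
          exact le_trans (le_trans (neg_le_neg (le_of_lt h'.1)) (neg_le_abs τ)) hτ
      have hz2 := hZ2b t htT
      calc ‖Complex.I * (β:ℂ) * (Complex.exp (e * t) * Z2 t)‖
          = |β| * ‖Z2 t‖ := by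
            simp only [norm_mul, Complex.norm_I, one_mul,
              habs_e1 t, Complex.norm_real, Real.norm_eq_abs]
        _ ≤ |β| * (D / μ) := mul_le_mul_of_nonneg_left hz2 (abs_nonneg β)
    calc ‖∫ t in (0:ℝ)..τ, Complex.I * (β:ℂ) * (Complex.exp (e * t) * Z2 t)‖
        ≤ (|β| * (D / μ)) * |τ - 0| := hb
      _ ≤ (|β| * (D / μ)) * T := by
          rw [sub_zero]
          exact mul_le_mul_of_nonneg_left hτ (by positivity)
  -- turn the FTC identity into the Z1 estimate
  have h001 : Complex.exp (e * ((0:ℝ):ℂ)) = 1 := by simp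
  have hexpinv : Complex.exp (Complex.I * (τ:ℂ)) * Complex.exp (e * (τ:ℂ)) = 1 := by
    rw [← Complex.exp_add]
    simp [he]
  have hZ1eq : Z1 τ - Complex.exp (Complex.I * (τ:ℂ)) * Z1 0
      = Complex.exp (Complex.I * (τ:ℂ))
        * ∫ t in (0:ℝ)..τ, Complex.I * (β:ℂ) * (Complex.exp (e * t) * Z2 t) := by
    simp only [h001, one_mul, Complex.ofReal_zero, mul_zero, Complex.exp_zero] at hftc1
    calc Z1 τ - Complex.exp (Complex.I * (τ:ℂ)) * Z1 0
        = Complex.exp (Complex.I * (τ:ℂ)) * (Complex.exp (e * (τ:ℂ)) * Z1 τ - Z1 0) := by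
          rw [mul_sub, ← mul_assoc, hexpinv, one_mul]
      _ = _ := by rw [← hftc1]
  have hZ1bd : ‖Z1 τ - γ * Complex.exp (Complex.I * (τ:ℂ))‖
      ≤ C₀ / μ + (|β| * (D / μ)) * T := by
    have hsplit1 : Z1 τ - γ * Complex.exp (Complex.I * (τ:ℂ))
        = (Z1 τ - Complex.exp (Complex.I * (τ:ℂ)) * Z1 0)
          + Complex.exp (Complex.I * (τ:ℂ)) * (Z1 0 - γ) := by ring
    have habsτ : ‖Complex.exp (Complex.I * (τ:ℂ))‖ = 1 := by
      simp [Complex.norm_exp]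
    calc ‖Z1 τ - γ * Complex.exp (Complex.I * (τ:ℂ))‖
        ≤ ‖Z1 τ - Complex.exp (Complex.I * (τ:ℂ)) * Z1 0‖
          + ‖Complex.exp (Complex.I * (τ:ℂ)) * (Z1 0 - γ)‖ := by
          rw [hsplit1]; exact norm_add_le _ _
      _ ≤ (|β| * (D / μ)) * T + ‖Z1 0 - γ‖ := by
          rw [hZ1eq, norm_mul, norm_mul, habsτ, one_mul, one_mul]
          exact add_le_add_left hIbd _
      _ ≤ C₀ / μ + (|β| * (D / μ)) * T := by
          have : ‖Z1 0 - γ‖ ≤ C₀ / μ := by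
            have := norm_nonneg (Z2 0); linarith
          linarith
  have hZ2τ := hZ2b τ hτ
  have heq2 : C₀ / μ + (|β| * (D / μ)) * T + D / μ = (C₀ + (|β| * T + 1) * D) / μ := by
    field_simp; ring
  have : ‖Z1 τ - γ * Complex.exp (Complex.I * (τ:ℂ))‖ + ‖Z2 τ‖
      ≤ (C₀ + (|β| * T + 1) * D) / μ := by linarith
  exact this

/-- Adiabatic limit for the model linear Hamiltonian system on ℂ²:
solutions with initial data `O(1/μ)`-close to `(γ, 0)` converge, uniformly on every
bounded interval `[a, b]`, to `(γ e^{iτ}, 0)` as `μ → +∞`. -/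
theorem model_adiabatic_limit_locally_uniform
    (β : ℝ) (γ : ℂ) (C₀ : ℝ) (hC₀ : 0 < C₀)
    (Z1 Z2 : ℝ → ℝ → ℂ)
    (hode1 : ∀ μ : ℝ, 1 ≤ μ → ∀ τ : ℝ,
      HasDerivAt (Z1 μ) (Complex.I * (Z1 μ τ + (β : ℂ) * Z2 μ τ)) τ)
    (hode2 : ∀ μ : ℝ, 1 ≤ μ → ∀ τ : ℝ,
      HasDerivAt (Z2 μ) (Complex.I * ((β : ℂ) * Z1 μ τ + (μ : ℂ) * Z2 μ τ)) τ)
    (hinit : ∀ μ : ℝ, 1 ≤ μ →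
      ‖Z1 μ 0 - γ‖ + ‖Z2 μ 0‖ ≤ C₀ / μ) :
    ∀ a b : ℝ, ∀ ε : ℝ, 0 < ε → ∃ μ₀ : ℝ, 1 ≤ μ₀ ∧ ∀ μ : ℝ, μ₀ ≤ μ →
      ∀ τ ∈ Set.Icc a b,
        ‖Z1 μ τ - γ * Complex.exp (Complex.I * (τ : ℂ))‖
          + ‖Z2 μ τ‖ ≤ ε := by
  intro a b ε hε
  set T : ℝ := |a| + |b| with hTdef
  set Ctot : ℝ := C₀ + (|β| * T + 1) *
      (C₀ + |β| * (2 * (‖γ‖ + C₀) + (1 + |β|) * (‖γ‖ + C₀) * T))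
    with hCtot
  have hT : 0 ≤ T := by positivity
  have hCpos : 0 < Ctot := by
    rw [hCtot]
    have h1 : 0 ≤ ‖γ‖ := norm_nonneg γ
    have h2 : 0 ≤ |β| := abs_nonneg β
    positivity
  refine ⟨max 1 (Ctot / ε), le_max_left _ _, ?_⟩
  intro μ hμ τ hτmem
  have hμ1 : 1 ≤ μ := le_trans (le_max_left _ _) hμ
  have hμ0 : 0 < μ := lt_of_lt_of_le one_pos hμ1
  have hτT : |τ| ≤ T := by
    rcases hτmem with ⟨ha, hb⟩
    rw [abs_le]
    constructor
    · have := neg_abs_le a; have := abs_nonneg b; linarith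
    · have := le_abs_self b; have := abs_nonneg a; linarith
  have key := key_bound β μ hμ1 γ C₀ T hC₀.le hT (Z1 μ) (Z2 μ)
    (hode1 μ hμ1) (hode2 μ hμ1) (hinit μ hμ1) τ hτT
  have hfin : Ctot / μ ≤ ε := by
    rw [div_le_iff₀ hμ0]
    have h2 : Ctot / ε ≤ μ := le_trans (le_max_right _ _) hμ
    rw [div_le_iff₀ hε] at h2
    nlinarith
  exact le_trans key hfin
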